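/- Let n ≥ 1, ω = exp(2π√−1/n), let t_0, …, t_{n−1} ∈ ℂ be pairwise distinct, and let e ∈ ℂ, e ≠ 0, satisfy eω^i ≠ t_j for all i, j. Set l(x) = ∏_{j=0}^{n−1}(x − t_j) with derivative l′, and C_{e,t} = (1/(eω^i − t_j))_{i,j=0}^{n−1}. Then the n×n Vandermonde matrix V_t is invertible, l′(t_j) ≠ 0 for all j, and V_t^{−1} = (1/√n) · diag(e^{−i})_{i=0}^{n−1} · Ω^H · diag(l(eω^i))_{i=0}^{n−1} · C_{e,t} · diag(1/l′(t_j))_{j=0}^{n−1}, where Ω^H = n^{−1/2}(ω^{−ij})_{i,j=0}^{n−1}. -/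

import Mathlib

open Polynomial Matrix Finset

/-- Equation (3.4) of the paper: the inverse of the `n × n` Vandermonde matrix
`V_t` is expressed through a CVᵀ-type Cauchy matrix `C_{e,t} = (1/(e ω^i - t_j))`
and the inverse DFT matrix `Ω^H = n^{-1/2}(ω^{-ij})`:
`V_t⁻¹ = (1/√n) · diag(e^{-i}) · Ω^H · diag(l(e ω^i)) · C_{e,t} · diag(1/l'(t_j))`
where `l(x) = ∏_j (x - t_j)`. -/
theorem vandermonde_inv_eq_cv_factorization (n : ℕ) (hn : 1 ≤ n)
    (ω : ℂ) (hω : ω = Complex.exp (2 * Real.pi * Complex.I / n))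
    (t : Fin n → ℂ) (ht : Function.Injective t)
    (e : ℂ) (he : e ≠ 0) (het : ∀ i j : Fin n, e * ω ^ (i : ℕ) ≠ t j)
    (l : Polynomial ℂ) (hl : l = ∏ j, (Polynomial.X - Polynomial.C (t j))) :
    IsUnit (Matrix.vandermonde t) ∧
      (∀ j, (Polynomial.derivative l).eval (t j) ≠ 0) ∧
      (Matrix.vandermonde t)⁻¹ =
        ((Real.sqrt n : ℂ))⁻¹ •
          (Matrix.diagonal (fun i : Fin n => e ^ (-(i : ℕ) : ℤ)) *
            (Matrix.of fun (i j : Fin n) =>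
              ω ^ (-((i : ℕ) * (j : ℕ)) : ℤ) / (Real.sqrt n : ℂ)) *
            Matrix.diagonal (fun i : Fin n => l.eval (e * ω ^ (i : ℕ))) *
            (Matrix.of fun (i j : Fin n) => (e * ω ^ (i : ℕ) - t j)⁻¹) *
            Matrix.diagonal (fun j : Fin n => ((Polynomial.derivative l).eval (t j))⁻¹)) := by
  have hn0 : (n : ℂ) ≠ 0 := Nat.cast_ne_zero.2 (by omega)
  have hprim : IsPrimitiveRoot ω n := hω ▸ Complex.isPrimitiveRoot_exp n (by omega)
  have hω1 : ω ^ n = 1 := hprim.pow_eq_one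
  have hωne : ω ≠ 0 := by
    intro h
    rw [h, zero_pow (by omega : n ≠ 0)] at hω1
    exact zero_ne_one hω1
  have hs : (Real.sqrt n : ℂ) * (Real.sqrt n : ℂ) = (n : ℂ) := by
    rw [← Complex.ofReal_mul, Real.mul_self_sqrt (Nat.cast_nonneg n)]
    simp
  have hsne : (Real.sqrt n : ℂ) ≠ 0 := by
    intro h
    rw [h, mul_zero] at hs
    exact hn0 hs.symm
  -- the cofactor polynomials
  set q : Fin n → ℂ[X] := fun j => ∏ m ∈ univ.erase j, (X - C (t m)) with hq
  have hlq : ∀ j, l = (X - C (t j)) * q j := fun j => by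
    rw [hl, hq]
    exact (Finset.mul_prod_erase univ _ (mem_univ j)).symm
  have hderiv : ∀ j, (Polynomial.derivative l).eval (t j) = (q j).eval (t j) := fun j => by
    rw [hlq j]
    simp [derivative_mul]
  have hd0 : ∀ j, (Polynomial.derivative l).eval (t j) ≠ 0 := by
    intro j
    rw [hderiv j, hq]
    simp only [eval_prod, eval_sub, eval_X, eval_C]
    refine Finset.prod_ne_zero_iff.2 fun m hm => sub_ne_zero.2 ?_
    intro h
    exact (mem_erase.1 hm).1 (ht h).symm
  have hdeg : ∀ j, (q j).natDegree < n := by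
    intro j
    have : (q j).natDegree = ∑ m ∈ univ.erase j, (X - C (t m)).natDegree :=
      natDegree_prod _ _ (fun m _ => X_sub_C_ne_zero (t m))
    rw [this]
    simp only [natDegree_X_sub_C, Finset.sum_const, smul_eq_mul, mul_one]
    rw [Finset.card_erase_of_mem (mem_univ j), Finset.card_univ, Fintype.card_fin]
    omega
  -- invertibility of the Vandermonde matrix
  have hdet : (Matrix.vandermonde t).det ≠ 0 :=
    Matrix.det_vandermonde_ne_zero_iff.2 ht
  have hVunit : IsUnit (Matrix.vandermonde t) :=
    (Matrix.isUnit_iff_isUnit_det _).2 (isUnit_iff_ne_zero.2 hdet)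
  -- DFT orthogonality
  have hdft : ∀ m k : Fin n,
      (∑ s : Fin n, ω ^ ((m : ℕ) * (s : ℕ)) * ω ^ (-((k : ℕ) * (s : ℕ)) : ℤ)) =
        if m = k then (n : ℂ) else 0 := by
    intro m k
    have hterm : ∀ s : Fin n,
        ω ^ ((m : ℕ) * (s : ℕ)) * ω ^ (-((k : ℕ) * (s : ℕ)) : ℤ)
          = (ω ^ ((m : ℕ) : ℤ) * ω ^ (-((k : ℕ)) : ℤ)) ^ (s : ℕ) := by
      intro s
      have h1 : ω ^ ((m : ℕ) * (s : ℕ)) = ω ^ (((m : ℕ) : ℤ) * ((s : ℕ) : ℤ)) := by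
        rw [← _root_.zpow_natCast ω ((m : ℕ) * (s : ℕ))]
        norm_cast
      have h2 : ω ^ (-((k : ℕ) * (s : ℕ)) : ℤ) = ω ^ ((-((k : ℕ) : ℤ)) * ((s : ℕ) : ℤ)) := by
        congr 1
        ring
      rw [h1, h2, _root_.zpow_mul, _root_.zpow_mul, mul_pow]
      norm_cast
    rw [Finset.sum_congr rfl (fun s _ => hterm s)]
    have hpow : ∀ d : ℤ, (ω ^ d) ^ n = 1 := by
      intro d
      rw [← _root_.zpow_natCast (ω ^ d), ← _root_.zpow_mul, mul_comm, _root_.zpow_mul,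
        _root_.zpow_natCast, hω1, _root_.one_zpow]
    by_cases hmk : m = k
    · subst hmk
      rw [if_pos rfl]
      have h1 : ω ^ ((m : ℕ) : ℤ) * ω ^ (-((m : ℕ)) : ℤ) = 1 := by
        rw [← zpow_add₀ hωne]
        simp
      have h2 : ∀ s : Fin n, (ω ^ ((m:ℕ):ℤ) * ω ^ (-((m:ℕ)):ℤ)) ^ (s : ℕ) = 1 := fun s => by
        rw [h1, one_pow]
      rw [Finset.sum_congr rfl fun s _ => h2 s]
      simp
    · rw [if_neg hmk]
      set ζ := ω ^ ((m : ℕ) : ℤ) * ω ^ (-((k : ℕ)) : ℤ) with hζ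
      have hζn : ζ ^ n = 1 := by
        rw [hζ, mul_pow, hpow, hpow, one_mul]
      have hζ1 : ζ ≠ 1 := by
        intro h
        apply hmk
        have h2 : ω ^ (m : ℕ) = ω ^ (k : ℕ) := by
          rw [hζ, _root_.zpow_neg,
            mul_inv_eq_one₀ (zpow_ne_zero _ hωne)] at h
          rw [← _root_.zpow_natCast ω (m:ℕ), ← _root_.zpow_natCast ω (k:ℕ)]
          exact h
        exact Fin.ext (hprim.pow_inj m.isLt k.isLt h2)
      calc (∑ s : Fin n, ζ ^ (s : ℕ)) = ∑ s ∈ Finset.range n, ζ ^ s :=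
            Fin.sum_univ_eq_sum_range _ n
        _ = (ζ ^ n - 1) / (ζ - 1) := geom_sum_eq hζ1 n
        _ = 0 := by rw [hζn]; simp
  -- the key entrywise identity for the right factor
  have key : ∀ k j : Fin n,
      ((Real.sqrt n : ℂ))⁻¹ *
        ((Matrix.diagonal (fun i : Fin n => e ^ (-(i : ℕ) : ℤ)) *
          (Matrix.of fun (i j : Fin n) =>
            ω ^ (-((i : ℕ) * (j : ℕ)) : ℤ) / (Real.sqrt n : ℂ)) *
          Matrix.diagonal (fun i : Fin n => l.eval (e * ω ^ (i : ℕ))) *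
          (Matrix.of fun (i j : Fin n) => (e * ω ^ (i : ℕ) - t j)⁻¹) *
          Matrix.diagonal (fun j : Fin n => ((Polynomial.derivative l).eval (t j))⁻¹)) k j)
      = (q j).coeff k * ((Polynomial.derivative l).eval (t j))⁻¹ := by
    intro k j
    have hstep : ∀ s : Fin n,
        l.eval (e * ω ^ (s : ℕ)) * (e * ω ^ (s : ℕ) - t j)⁻¹
          = (q j).eval (e * ω ^ (s : ℕ)) := by
      intro s
      rw [hlq j]
      rw [eval_mul]
      simp only [eval_sub, eval_X, eval_C]
      rw [mul_comm, ← mul_assoc, inv_mul_cancel₀ (sub_ne_zero.2 (het s j)), one_mul]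
    rw [Matrix.mul_diagonal, Matrix.mul_apply]
    simp only [Matrix.mul_diagonal, Matrix.diagonal_mul, Matrix.of_apply]
    have hsum : (∑ s : Fin n,
        e ^ (-(k : ℕ) : ℤ) * (ω ^ (-((k : ℕ) * (s : ℕ)) : ℤ) / (Real.sqrt n : ℂ)) *
          l.eval (e * ω ^ (s : ℕ)) * (e * ω ^ (s : ℕ) - t j)⁻¹)
        = e ^ (-(k : ℕ) : ℤ) * (Real.sqrt n : ℂ)⁻¹ *
            ∑ s : Fin n, ω ^ (-((k : ℕ) * (s : ℕ)) : ℤ) * (q j).eval (e * ω ^ (s : ℕ)) := by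
      rw [Finset.mul_sum]
      refine Finset.sum_congr rfl fun s _ => ?_
      rw [← hstep s]
      field_simp
    rw [hsum]
    have heval : ∀ s : Fin n, (q j).eval (e * ω ^ (s : ℕ))
        = ∑ m ∈ Finset.range n, (q j).coeff m * e ^ m * ω ^ (m * (s : ℕ)) := by
      intro s
      rw [Polynomial.eval_eq_sum_range' (hdeg j)]
      refine Finset.sum_congr rfl fun m _ => ?_
      rw [mul_pow, pow_mul]
      ring
    have hsum2 : (∑ s : Fin n, ω ^ (-((k : ℕ) * (s : ℕ)) : ℤ) * (q j).eval (e * ω ^ (s : ℕ)))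
        = (n : ℂ) * ((q j).coeff k * e ^ (k : ℕ)) := by
      calc (∑ s : Fin n, ω ^ (-((k : ℕ) * (s : ℕ)) : ℤ) * (q j).eval (e * ω ^ (s : ℕ)))
          = ∑ s : Fin n, ∑ m ∈ Finset.range n,
              (q j).coeff m * e ^ m * (ω ^ (m * (s : ℕ)) * ω ^ (-((k : ℕ) * (s : ℕ)) : ℤ)) := by
            refine Finset.sum_congr rfl fun s _ => ?_
            rw [heval s, Finset.mul_sum]
            refine Finset.sum_congr rfl fun m _ => ?_
            ring
        _ = ∑ m ∈ Finset.range n, ∑ s : Fin n,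
              (q j).coeff m * e ^ m * (ω ^ (m * (s : ℕ)) * ω ^ (-((k : ℕ) * (s : ℕ)) : ℤ)) :=
            Finset.sum_comm
        _ = ∑ m : Fin n, ∑ s : Fin n,
              (q j).coeff m * e ^ (m : ℕ) *
                (ω ^ ((m : ℕ) * (s : ℕ)) * ω ^ (-((k : ℕ) * (s : ℕ)) : ℤ)) :=
            (Fin.sum_univ_eq_sum_range _ n).symm
        _ = ∑ m : Fin n, (q j).coeff m * e ^ (m : ℕ) * (if m = k then (n : ℂ) else 0) := by
            refine Finset.sum_congr rfl fun m _ => ?_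
            rw [← Finset.mul_sum, hdft m k]
        _ = (n : ℂ) * ((q j).coeff k * e ^ (k : ℕ)) := by
            simp only [mul_ite, mul_zero, Finset.sum_ite_eq', Finset.mem_univ, if_true]
            ring
    rw [hsum2]
    have hek : (e ^ (k : ℕ))⁻¹ * e ^ (k : ℕ) = 1 := inv_mul_cancel₀ (pow_ne_zero _ he)
    have hss : ((Real.sqrt n : ℂ))⁻¹ * (Real.sqrt n : ℂ)⁻¹ * (n : ℂ) = 1 := by
      rw [← hs]
      field_simp
    calc ((Real.sqrt n : ℂ))⁻¹ *
          (e ^ (-(k : ℕ) : ℤ) * (Real.sqrt n : ℂ)⁻¹ *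
            ((n : ℂ) * ((q j).coeff k * e ^ (k : ℕ))) *
            ((Polynomial.derivative l).eval (t j))⁻¹)
        = ((Real.sqrt n : ℂ))⁻¹ * (Real.sqrt n : ℂ)⁻¹ * (n : ℂ) *
            ((e ^ (k : ℕ))⁻¹ * e ^ (k : ℕ)) *
            ((q j).coeff k * ((Polynomial.derivative l).eval (t j))⁻¹) := by
          rw [_root_.zpow_neg, _root_.zpow_natCast]
          ring
      _ = (q j).coeff k * ((Polynomial.derivative l).eval (t j))⁻¹ := by
          rw [hss, hek, one_mul, one_mul]
  -- assemble
  refine ⟨hVunit, hd0, ?_⟩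
  apply Matrix.inv_eq_right_inv
  ext i j
  rw [Matrix.mul_apply]
  have hentry : ∀ k : Fin n,
      Matrix.vandermonde t i k *
        (((Real.sqrt n : ℂ))⁻¹ •
          (Matrix.diagonal (fun i : Fin n => e ^ (-(i : ℕ) : ℤ)) *
            (Matrix.of fun (i j : Fin n) =>
              ω ^ (-((i : ℕ) * (j : ℕ)) : ℤ) / (Real.sqrt n : ℂ)) *
            Matrix.diagonal (fun i : Fin n => l.eval (e * ω ^ (i : ℕ))) *
            (Matrix.of fun (i j : Fin n) => (e * ω ^ (i : ℕ) - t j)⁻¹) *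
            Matrix.diagonal (fun j : Fin n => ((Polynomial.derivative l).eval (t j))⁻¹))) k j
      = (q j).coeff k * t i ^ (k : ℕ) * ((Polynomial.derivative l).eval (t j))⁻¹ := by
    intro k
    rw [Matrix.smul_apply, smul_eq_mul, key k j, Matrix.vandermonde_apply]
    ring
  rw [Finset.sum_congr rfl fun k _ => hentry k]
  have : (∑ k : Fin n, (q j).coeff k * t i ^ (k : ℕ) * ((Polynomial.derivative l).eval (t j))⁻¹)
      = (q j).eval (t i) * ((Polynomial.derivative l).eval (t j))⁻¹ := by
    rw [Polynomial.eval_eq_sum_range' (hdeg j), ← Finset.sum_mul,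
      Fin.sum_univ_eq_sum_range (fun m => (q j).coeff m * t i ^ m) n]
  rw [this]
  by_cases hij : i = j
  · subst hij
    rw [← hderiv i, mul_inv_cancel₀ (hd0 i), Matrix.one_apply_eq]
  · rw [Matrix.one_apply_ne hij]
    have : (q j).eval (t i) = 0 := by
      rw [hq]
      simp only [eval_prod, eval_sub, eval_X, eval_C]
      exact Finset.prod_eq_zero (mem_erase.2 ⟨hij, mem_univ i⟩) (sub_self (t i))
    rw [this, zero_mul]
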